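/- For the Turán graph T_{n,r} with r dividing n: it has (1 − 1/r)n²/2 edges and n(n − n/r)(n − 2n/r)/6 triangles, and PI_w(T_{n,r}) = n²m − 9t²/m where m and t are its edge and triangle counts. -/

import Mathlib

open Finset
open scoped Classical

/-- Number of vertices strictly closer to `u` than to `v`. -/
noncomputable def ncl {V : Type*} [Fintype V] (G : SimpleGraph V) (u v : V) : ℕ :=
  (Finset.univ.filter fun x => G.dist x u < G.dist x v).card

/-- Weighted vertex PI index: each edge `uv` contributes
`(deg u + deg v) * (n_u(e) + n_v(e))`; each edge is counted twice in the double sum. -/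
noncomputable def PIw {V : Type*} [Fintype V] (G : SimpleGraph V) : ℝ :=
  (∑ u, ∑ v, if G.Adj u v then
    (((G.degree u + G.degree v : ℕ) : ℝ) * ((ncl G u v + ncl G v u : ℕ) : ℝ)) else 0) / 2

private lemma classCard (n r : ℕ) (hr : 0 < r) (hdvd : r ∣ n) (b : ℕ) (hb : b < r) :
    (Finset.univ.filter fun w : Fin n => (w : ℕ) % r = b).card = n / r := by
  have h1 : (Finset.univ.filter fun w : Fin n => (w : ℕ) % r = b).card
      = ((Finset.range n).filter fun w => w % r = b).card := by
    rw [Finset.card_filter, Finset.card_filter]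
    exact Fin.sum_univ_eq_sum_range (fun i => if i % r = b then 1 else 0) n
  have h2 : (Finset.range n).filter (fun w => w % r = b)
      = (Finset.range (n / r)).image (fun j => j * r + b) := by
    ext m
    simp only [Finset.mem_filter, Finset.mem_range, Finset.mem_image]
    constructor
    · rintro ⟨hm, hmod⟩
      refine ⟨m / r, Nat.div_lt_div_of_lt_of_dvd hdvd hm, ?_⟩
      rw [← hmod, Nat.mul_comm]; exact Nat.div_add_mod m r
    · rintro ⟨j, hj, rfl⟩
      have hle : (j + 1) * r ≤ n := by
        calc (j + 1) * r ≤ (n / r) * r := Nat.mul_le_mul_right r (Nat.succ_le_of_lt hj)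
        _ = n := Nat.div_mul_cancel hdvd
      constructor
      · calc j * r + b < (j + 1) * r := by rw [add_mul, one_mul]; omega
          _ ≤ n := hle
      · rw [add_comm, mul_comm, Nat.add_mul_mod_self_left]
        exact Nat.mod_eq_of_lt hb
  have hinj : Function.Injective (fun j => j * r + b) := by
    intro x y hxy
    simp only at hxy
    exact Nat.eq_of_mul_eq_mul_right hr (by omega)
  rw [h1, h2, Finset.card_image_of_injective _ hinj, Finset.card_range]

private lemma turanAdj (n r : ℕ) (v w : Fin n) :
    (SimpleGraph.turanGraph n r).Adj v w ↔ (v : ℕ) % r ≠ (w : ℕ) % r := Iff.rfl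

private lemma turanDegree (n r : ℕ) (hr : 0 < r) (hdvd : r ∣ n) (v : Fin n) :
    (SimpleGraph.turanGraph n r).degree v = n - n / r := by
  classical
  rw [← SimpleGraph.card_neighborFinset_eq_degree]
  have h : (SimpleGraph.turanGraph n r).neighborFinset v
      = (Finset.univ.filter fun w : Fin n => (w : ℕ) % r = (v : ℕ) % r)ᶜ := by
    ext w
    simp only [SimpleGraph.mem_neighborFinset, Finset.mem_compl, Finset.mem_filter,
      Finset.mem_univ, true_and, turanAdj]
    exact ne_comm
  rw [h, Finset.card_compl, classCard n r hr hdvd _ (Nat.mod_lt _ hr), Fintype.card_fin]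

private lemma sumMod (n r : ℕ) (hr : 0 < r) (hdvd : r ∣ n) (f : ℕ → ℕ) :
    ∑ u : Fin n, f ((u : ℕ) % r) = ∑ b ∈ Finset.range r, (n / r) * f b := by
  classical
  rw [← Finset.sum_fiberwise_of_maps_to (g := fun u : Fin n => (u : ℕ) % r)
      (fun u _ => Finset.mem_range.mpr (Nat.mod_lt _ hr))]
  refine Finset.sum_congr rfl fun b hb => ?_
  rw [Finset.sum_congr rfl (fun u hu => by rw [(Finset.mem_filter.mp hu).2]),
    Finset.sum_const, classCard n r hr hdvd b (Finset.mem_range.mp hb), smul_eq_mul]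

private lemma turanDistTwo (n r : ℕ) (hr2 : 2 ≤ r) (hrn : r ≤ n) (x u : Fin n)
    (hne : x ≠ u) (hmod : (x : ℕ) % r = (u : ℕ) % r) :
    (SimpleGraph.turanGraph n r).dist x u = 2 := by
  obtain ⟨b, hbr, hbx⟩ : ∃ b, b < r ∧ b ≠ (x : ℕ) % r := by
    by_cases h : (x : ℕ) % r = 0
    · exact ⟨1, by omega, by rw [h]; exact one_ne_zero⟩
    · exact ⟨0, by omega, Ne.symm h⟩
  set w : Fin n := ⟨b, lt_of_lt_of_le hbr hrn⟩ with hw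
  have hwb : (w : ℕ) % r = b := Nat.mod_eq_of_lt hbr
  have haxw : (SimpleGraph.turanGraph n r).Adj x w := by
    rw [turanAdj, hwb]; exact fun h => hbx h.symm
  have hawu : (SimpleGraph.turanGraph n r).Adj w u := by
    rw [turanAdj, hwb]; rw [← hmod]; exact hbx
  let p : (SimpleGraph.turanGraph n r).Walk x u := .cons haxw (.cons hawu .nil)
  have h2 : (SimpleGraph.turanGraph n r).dist x u ≤ 2 := by
    simpa [p] using SimpleGraph.dist_le p
  have h0 : (SimpleGraph.turanGraph n r).dist x u ≠ 0 := by
    rw [SimpleGraph.dist_ne_zero_iff_ne_and_reachable]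
    exact ⟨hne, ⟨p⟩⟩
  have h1 : (SimpleGraph.turanGraph n r).dist x u ≠ 1 := by
    rw [Ne, SimpleGraph.dist_eq_one_iff_adj]
    intro hadj; exact hadj hmod
  omega

private lemma turanNcl (n r : ℕ) (hr : 0 < r) (hdvd : r ∣ n) (u v : Fin n)
    (huv : (SimpleGraph.turanGraph n r).Adj u v) :
    ncl (SimpleGraph.turanGraph n r) u v = n / r := by
  classical
  set G := SimpleGraph.turanGraph n r with hG
  have hmod : (u : ℕ) % r ≠ (v : ℕ) % r := huv
  have hn : 0 < n := Fin.pos u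
  have hr2 : 2 ≤ r := by
    rcases Nat.lt_or_ge r 2 with h | h
    · exfalso
      have : r = 1 := by omega
      subst this
      simp [Nat.mod_one] at hmod
    · exact h
  have hrn : r ≤ n := Nat.le_of_dvd hn hdvd
  have hneuv : u ≠ v := G.ne_of_adj huv
  have hdist1 : ∀ a b : Fin n, (a : ℕ) % r ≠ (b : ℕ) % r → G.dist a b = 1 := by
    intro a b h
    exact SimpleGraph.dist_eq_one_iff_adj.mpr h
  have hset : (Finset.univ.filter fun x : Fin n => G.dist x u < G.dist x v)
      = insert u ((Finset.univ.filter fun x : Fin n => (x : ℕ) % r = (v : ℕ) % r).erase v) := by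
    ext x
    simp only [Finset.mem_filter, Finset.mem_univ, true_and, Finset.mem_insert,
      Finset.mem_erase]
    by_cases hxu : x = u
    · subst hxu
      rw [SimpleGraph.dist_self, hdist1 x v hmod]
      simp
    by_cases hxv : x = v
    · subst hxv
      rw [SimpleGraph.dist_self, hdist1 x u (fun h => hmod h.symm)]
      simp [hxu, Ne.symm hxu]
    by_cases h1 : (x : ℕ) % r = (u : ℕ) % r
    · rw [turanDistTwo n r hr2 hrn x u hxu h1, hdist1 x v (h1 ▸ hmod)]
      simp [hxu, hxv, h1 ▸ hmod]
    by_cases h2 : (x : ℕ) % r = (v : ℕ) % r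
    · rw [turanDistTwo n r hr2 hrn x v hxv h2, hdist1 x u (h2 ▸ fun h => hmod h.symm)]
      simp [hxu, hxv, h2]
    · rw [hdist1 x u h1, hdist1 x v h2]
      simp [hxu, hxv, h2]
  rw [ncl, hset]
  have hv : v ∈ Finset.univ.filter (fun x : Fin n => (x : ℕ) % r = (v : ℕ) % r) := by simp
  have hu : u ∉ (Finset.univ.filter (fun x : Fin n => (x : ℕ) % r = (v : ℕ) % r)).erase v := by
    simp only [Finset.mem_erase, Finset.mem_filter, Finset.mem_univ, true_and]
    exact fun h => hmod h.2
  rw [Finset.card_insert_of_notMem hu, Finset.card_erase_of_mem hv,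
    classCard n r hr hdvd _ (Nat.mod_lt _ hr)]
  have hkpos : 0 < n / r := Nat.div_pos hrn hr
  omega

private lemma turanEdges (n r : ℕ) (hr : 0 < r) (hdvd : r ∣ n) :
    2 * (SimpleGraph.turanGraph n r).edgeFinset.card = n * (n - n / r) := by
  classical
  rw [← SimpleGraph.sum_degrees_eq_twice_card_edges]
  rw [Finset.sum_congr rfl (fun v _ => turanDegree n r hr hdvd v), Finset.sum_const,
    Finset.card_univ, Fintype.card_fin, smul_eq_mul]

private lemma permCount (r : ℕ) :
    ∑ a ∈ Finset.range r, ∑ b ∈ Finset.range r, ∑ c ∈ Finset.range r,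
      (if a ≠ b ∧ a ≠ c ∧ b ≠ c then 1 else 0) = r * (r - 1) * (r - 2) := by
  classical
  have hinner : ∀ a b : ℕ, a ∈ Finset.range r → b ∈ Finset.range r → a ≠ b →
      ∑ c ∈ Finset.range r, (if a ≠ b ∧ a ≠ c ∧ b ≠ c then 1 else 0) = r - 2 := by
    intro a b ha hb hab
    rw [← Finset.card_filter]
    have : (Finset.range r).filter (fun c => a ≠ b ∧ a ≠ c ∧ b ≠ c)
        = Finset.range r \ {a, b} := by
      ext c
      simp only [Finset.mem_filter, Finset.mem_sdiff, Finset.mem_insert, Finset.mem_singleton,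
        Finset.mem_range]
      constructor
      · rintro ⟨hc, _, hac, hbc⟩
        exact ⟨hc, by tauto⟩
      · rintro ⟨hc, h⟩
        exact ⟨hc, hab, by tauto, by tauto⟩
    rw [this, Finset.card_sdiff_of_subset (by
      intro x hx
      simp only [Finset.mem_insert, Finset.mem_singleton] at hx
      rcases hx with rfl | rfl
      · exact ha
      · exact hb)]
    rw [Finset.card_range, Finset.card_insert_of_notMem (by simpa using hab),
      Finset.card_singleton]
  have hmid : ∀ a ∈ Finset.range r, ∑ b ∈ Finset.range r, ∑ c ∈ Finset.range r,
      (if a ≠ b ∧ a ≠ c ∧ b ≠ c then 1 else 0) = (r - 1) * (r - 2) := by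
    intro a ha
    rw [← Finset.sum_erase_add _ _ ha]
    have hz : ∑ c ∈ Finset.range r, (if a ≠ a ∧ a ≠ c ∧ a ≠ c then 1 else 0) = 0 :=
      Finset.sum_eq_zero (fun c _ => by simp)
    rw [hz, add_zero,
      Finset.sum_congr rfl (fun b hb => hinner a b ha (Finset.mem_of_mem_erase hb)
        (Ne.symm (Finset.ne_of_mem_erase hb))),
      Finset.sum_const, Finset.card_erase_of_mem ha, Finset.card_range, smul_eq_mul]
  rw [Finset.sum_congr rfl hmid, Finset.sum_const, Finset.card_range, smul_eq_mul, mul_assoc]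

private lemma turanTriangles (n r : ℕ) (hr : 0 < r) (hdvd : r ∣ n) :
    6 * ((SimpleGraph.turanGraph n r).cliqueFinset 3).card
      = r * (r - 1) * (r - 2) * (n / r) ^ 3 := by
  classical
  set G := SimpleGraph.turanGraph n r with hG
  set S : Finset (Fin n × Fin n × Fin n) :=
    Finset.univ.filter (fun p => G.Adj p.1 p.2.1 ∧ G.Adj p.1 p.2.2 ∧ G.Adj p.2.1 p.2.2) with hS
  have hA : S.card = 6 * (G.cliqueFinset 3).card := by
    have hmaps : ∀ p ∈ S, ({p.1, p.2.1, p.2.2} : Finset (Fin n)) ∈ G.cliqueFinset 3 := by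
      rintro ⟨x, y, z⟩ hp
      rw [hS, Finset.mem_filter] at hp
      exact SimpleGraph.mem_cliqueFinset_iff.mpr (SimpleGraph.is3Clique_triple_iff.mpr hp.2)
    rw [Finset.card_eq_sum_card_fiberwise hmaps]
    have hfiber : ∀ t ∈ G.cliqueFinset 3,
        (S.filter fun p => ({p.1, p.2.1, p.2.2} : Finset (Fin n)) = t).card = 6 := by
      intro t ht
      obtain ⟨a, b, c, hab, hac, hbc, rfl⟩ :=
        SimpleGraph.is3Clique_iff.mp (SimpleGraph.mem_cliqueFinset_iff.mp ht)
      have nab := G.ne_of_adj hab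
      have nac := G.ne_of_adj hac
      have nbc := G.ne_of_adj hbc
      have hfib : S.filter (fun p => ({p.1, p.2.1, p.2.2} : Finset (Fin n)) = {a, b, c})
          = {(a,b,c), (a,c,b), (b,a,c), (b,c,a), (c,a,b), (c,b,a)} := by
        ext ⟨x, y, z⟩
        simp only [hS, Finset.mem_filter, Finset.mem_univ, true_and, Finset.mem_insert,
          Finset.mem_singleton, Prod.mk.injEq]
        constructor
        · rintro ⟨⟨hxy, hxz, hyz⟩, he⟩
          have hmem : ∀ w : Fin n, w ∈ ({x, y, z} : Finset (Fin n)) → w = a ∨ w = b ∨ w = c := by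
            intro w hw
            rw [he] at hw
            simpa using hw
          have hx := hmem x (by simp)
          have hy := hmem y (by simp)
          have hz := hmem z (by simp)
          have nxy := G.ne_of_adj hxy
          have nxz := G.ne_of_adj hxz
          have nyz := G.ne_of_adj hyz
          rcases hx with rfl | rfl | rfl <;> rcases hy with rfl | rfl | rfl <;>
            rcases hz with rfl | rfl | rfl <;> simp_all
        · have hperm : ∀ x' y' z' : Fin n,
              ({x', y', z'} : Finset (Fin n)) = {a, b, c} →
              G.Adj x' y' → G.Adj x' z' → G.Adj y' z' →
              (G.Adj x' y' ∧ G.Adj x' z' ∧ G.Adj y' z') ∧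
                ({x', y', z'} : Finset (Fin n)) = {a, b, c} :=
            fun _ _ _ he h1 h2 h3 => ⟨⟨h1, h2, h3⟩, he⟩
          rintro (⟨rfl, rfl, rfl⟩ | ⟨rfl, rfl, rfl⟩ | ⟨rfl, rfl, rfl⟩ | ⟨rfl, rfl, rfl⟩ |
            ⟨rfl, rfl, rfl⟩ | ⟨rfl, rfl, rfl⟩)
          · exact hperm _ _ _ rfl hab hac hbc
          · exact hperm _ _ _ (by ext w; simp; tauto) hac hab hbc.symm
          · exact hperm _ _ _ (by ext w; simp; tauto) hab.symm hbc hac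
          · exact hperm _ _ _ (by ext w; simp; tauto) hbc hab.symm hac.symm
          · exact hperm _ _ _ (by ext w; simp; tauto) hac.symm hbc.symm hab
          · exact hperm _ _ _ (by ext w; simp; tauto) hbc.symm hac.symm hab.symm
      rw [hfib]
      rw [Finset.card_insert_of_notMem (by simp [Prod.ext_iff, nab, nac, nbc, nab.symm,
          nac.symm, nbc.symm]),
        Finset.card_insert_of_notMem (by simp [Prod.ext_iff, nab, nac, nbc, nab.symm,
          nac.symm, nbc.symm]),
        Finset.card_insert_of_notMem (by simp [Prod.ext_iff, nab, nac, nbc, nab.symm,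
          nac.symm, nbc.symm]),
        Finset.card_insert_of_notMem (by simp [Prod.ext_iff, nab, nac, nbc, nab.symm,
          nac.symm, nbc.symm]),
        Finset.card_insert_of_notMem (by simp [Prod.ext_iff, nab, nac, nbc, nab.symm,
          nac.symm, nbc.symm]),
        Finset.card_singleton]
    rw [Finset.sum_congr rfl hfiber, Finset.sum_const, smul_eq_mul, mul_comm]
  have hB : S.card = r * (r - 1) * (r - 2) * (n / r) ^ 3 := by
    have e1 : S.card = ∑ u : Fin n, ∑ v : Fin n, ∑ w : Fin n,
        (if (u : ℕ) % r ≠ (v : ℕ) % r ∧ (u : ℕ) % r ≠ (w : ℕ) % r ∧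
            (v : ℕ) % r ≠ (w : ℕ) % r then 1 else 0) := by
      rw [hS, Finset.card_filter, Fintype.sum_prod_type]
      refine Finset.sum_congr rfl fun u _ => ?_
      rw [Fintype.sum_prod_type]
      refine Finset.sum_congr rfl fun v _ => Finset.sum_congr rfl fun w _ => ?_
      exact if_congr Iff.rfl rfl rfl
    have l1 := sumMod n r hr hdvd
    rw [e1]
    rw [l1 (fun x => ∑ v : Fin n, ∑ w : Fin n,
      (if x ≠ (v : ℕ) % r ∧ x ≠ (w : ℕ) % r ∧ (v : ℕ) % r ≠ (w : ℕ) % r then 1 else 0))]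
    rw [Finset.sum_congr rfl (fun a _ => by
      rw [l1 (fun x => ∑ w : Fin n,
        (if a ≠ x ∧ a ≠ (w : ℕ) % r ∧ x ≠ (w : ℕ) % r then 1 else 0))])]
    rw [Finset.sum_congr rfl (fun a _ => by
      rw [Finset.sum_congr rfl (fun b _ => by
        rw [l1 (fun x => (if a ≠ b ∧ a ≠ x ∧ b ≠ x then 1 else 0))])])]
    simp only [← Finset.mul_sum]
    rw [permCount r]
    ring
  show 6 * (G.cliqueFinset 3).card = r * (r - 1) * (r - 2) * (n / r) ^ 3
  rw [← hB, hA]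

private lemma degInst {V : Type*} (G : SimpleGraph V) (v : V)
    (i1 i2 : Fintype (G.neighborSet v)) :
    @SimpleGraph.degree V G v i1 = @SimpleGraph.degree V G v i2 := by
  rw [Subsingleton.elim i1 i2]

private lemma PIw_eq (n r : ℕ) :
    PIw (SimpleGraph.turanGraph n r) = (∑ u, ∑ v, if (SimpleGraph.turanGraph n r).Adj u v then
      ((((SimpleGraph.turanGraph n r).degree u + (SimpleGraph.turanGraph n r).degree v : ℕ)) : ℝ)
        * (((ncl (SimpleGraph.turanGraph n r) u v
            + ncl (SimpleGraph.turanGraph n r) v u : ℕ)) : ℝ) else 0) / 2 := by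
  rw [PIw]
  congr 1
  refine Finset.sum_congr rfl fun u _ => Finset.sum_congr rfl fun v _ => ?_
  by_cases h : (SimpleGraph.turanGraph n r).Adj u v
  · rw [if_pos h, if_pos h]
    congr 3
    · exact degInst _ u _ _
    · exact degInst _ v _ _
  · rw [if_neg h, if_neg h]

set_option maxHeartbeats 1000000 in
theorem PIw_turanGraph (n r : ℕ) (hr : 0 < r) (hdvd : r ∣ n) :
    ((SimpleGraph.turanGraph n r).edgeFinset.card : ℝ) =
      (1 - 1 / (r : ℝ)) * (n : ℝ) ^ 2 / 2 ∧
    (((SimpleGraph.turanGraph n r).cliqueFinset 3).card : ℝ) =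
      (n : ℝ) * ((n : ℝ) - (n : ℝ) / (r : ℝ)) * ((n : ℝ) - 2 * (n : ℝ) / (r : ℝ)) / 6 ∧
    PIw (SimpleGraph.turanGraph n r) =
      (n : ℝ) ^ 2 * ((SimpleGraph.turanGraph n r).edgeFinset.card : ℝ) -
      9 * (((SimpleGraph.turanGraph n r).cliqueFinset 3).card : ℝ) ^ 2 /
        ((SimpleGraph.turanGraph n r).edgeFinset.card : ℝ) := by
  classical
  have hkn : n / r ≤ n := Nat.div_le_self n r
  have hE := turanEdges n r hr hdvd
  have hT := turanTriangles n r hr hdvd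
  have hnrk : n = r * (n / r) := (Nat.mul_div_cancel' hdvd).symm
  have hrR : (r : ℝ) ≠ 0 := Nat.cast_ne_zero.mpr hr.ne'
  have hnR : (n : ℝ) = (r : ℝ) * ((n / r : ℕ) : ℝ) := by exact_mod_cast hnrk
  have hER : 2 * (((SimpleGraph.turanGraph n r).edgeFinset.card : ℕ) : ℝ)
      = (n : ℝ) * ((n : ℝ) - ((n / r : ℕ) : ℝ)) := by
    have h2 : ((2 * (SimpleGraph.turanGraph n r).edgeFinset.card : ℕ) : ℝ)
        = ((n * (n - n / r) : ℕ) : ℝ) := by exact_mod_cast hE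
    push_cast [Nat.cast_sub hkn] at h2
    exact h2
  refine ⟨?_, ?_, ?_⟩
  · have hEv : (((SimpleGraph.turanGraph n r).edgeFinset.card : ℕ) : ℝ)
        = (n : ℝ) * ((n : ℝ) - ((n / r : ℕ) : ℝ)) / 2 := by linarith
    rw [hEv, hnR]
    field_simp
  · rcases Nat.lt_or_ge r 2 with h2 | h2
    · have hr1 : r = 1 := by omega
      subst hr1
      have hT0 : ((SimpleGraph.turanGraph n 1).cliqueFinset 3).card = 0 := by omega
      rw [hT0]
      simp
    · have hTR : 6 * ((((SimpleGraph.turanGraph n r).cliqueFinset 3).card : ℕ) : ℝ)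
          = (r : ℝ) * ((r : ℝ) - 1) * ((r : ℝ) - 2) * ((n / r : ℕ) : ℝ) ^ 3 := by
        have h6 : ((6 * ((SimpleGraph.turanGraph n r).cliqueFinset 3).card : ℕ) : ℝ)
            = ((r * (r - 1) * (r - 2) * (n / r) ^ 3 : ℕ) : ℝ) := by exact_mod_cast hT
        push_cast [Nat.cast_sub (show 1 ≤ r by omega), Nat.cast_sub h2] at h6
        exact h6
      have hdivK : (n : ℝ) / (r : ℝ) = ((n / r : ℕ) : ℝ) := by
        rw [hnR]; field_simp
      rw [show (2:ℝ) * (n:ℝ) / (r:ℝ) = 2 * ((n:ℝ)/(r:ℝ)) by rw [mul_div_assoc], hdivK, hnR]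
      have hid : ((r : ℝ) * ((n / r : ℕ) : ℝ))
          * ((r : ℝ) * ((n / r : ℕ) : ℝ) - ((n / r : ℕ) : ℝ))
          * ((r : ℝ) * ((n / r : ℕ) : ℝ) - 2 * ((n / r : ℕ) : ℝ))
          = (r : ℝ) * ((r : ℝ) - 1) * ((r : ℝ) - 2) * ((n / r : ℕ) : ℝ) ^ 3 := by ring
      rw [eq_div_iff (by norm_num : (6 : ℝ) ≠ 0)]
      linarith
  · have hC : ∀ u v : Fin n, (SimpleGraph.turanGraph n r).Adj u v →
        ((((SimpleGraph.turanGraph n r).degree u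
            + (SimpleGraph.turanGraph n r).degree v : ℕ)) : ℝ)
          * (((ncl (SimpleGraph.turanGraph n r) u v
            + ncl (SimpleGraph.turanGraph n r) v u : ℕ)) : ℝ)
          = ((((n - n / r) + (n - n / r) : ℕ)) : ℝ) * (((n / r + n / r : ℕ)) : ℝ) := by
      intro u v h
      rw [turanDegree n r hr hdvd u, turanDegree n r hr hdvd v,
        turanNcl n r hr hdvd u v h, turanNcl n r hr hdvd v u h.symm]
    have hterm : ∀ (u v : Fin n) (inst : Decidable ((SimpleGraph.turanGraph n r).Adj u v)),
        (@ite ℝ ((SimpleGraph.turanGraph n r).Adj u v) inst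
          (((((SimpleGraph.turanGraph n r).degree u
              + (SimpleGraph.turanGraph n r).degree v : ℕ)) : ℝ)
            * (((ncl (SimpleGraph.turanGraph n r) u v
              + ncl (SimpleGraph.turanGraph n r) v u : ℕ)) : ℝ)) 0)
        = @ite ℝ ((SimpleGraph.turanGraph n r).Adj u v) inst
            (((((n - n / r) + (n - n / r) : ℕ)) : ℝ) * (((n / r + n / r : ℕ)) : ℝ)) 0 := by
      intro u v inst
      by_cases h : (SimpleGraph.turanGraph n r).Adj u v
      · rw [if_pos h, if_pos h, hC u v h]
      · rw [if_neg h, if_neg h]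
    have hdeg : ∀ (u : Fin n) (inst : DecidablePred ((SimpleGraph.turanGraph n r).Adj u)),
        (@Finset.filter _ ((SimpleGraph.turanGraph n r).Adj u) inst Finset.univ).card
          = (SimpleGraph.turanGraph n r).degree u := by
      intro u inst
      have heq : (@Finset.filter _ ((SimpleGraph.turanGraph n r).Adj u) inst Finset.univ)
          = (SimpleGraph.turanGraph n r).neighborFinset u := by
        ext w
        simp [SimpleGraph.mem_neighborFinset]
      rw [heq, SimpleGraph.card_neighborFinset_eq_degree]
    rw [PIw_eq n r]
    simp only [hterm, Finset.sum_ite, Finset.sum_const, Finset.sum_const_zero, add_zero,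
      nsmul_eq_mul, hdeg, mul_zero, add_zero]
    rw [← Finset.sum_mul, ← Nat.cast_sum]
    rw [SimpleGraph.sum_degrees_eq_twice_card_edges]
    push_cast [Nat.cast_sub hkn]
    by_cases hE0 : (((SimpleGraph.turanGraph n r).edgeFinset.card : ℕ) : ℝ) = 0
    · rw [hE0]
      norm_num
    · have hkR : ((n - n / r : ℕ) : ℝ) = (n : ℝ) - ((n / r : ℕ) : ℝ) := Nat.cast_sub hkn
      have hne : (n : ℝ) * ((n : ℝ) - ((n / r : ℕ) : ℝ)) ≠ 0 := by
        intro h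
        apply hE0
        linarith [hER]
      have hn0 : (n : ℝ) ≠ 0 := fun h => hne (by rw [h]; ring)
      have hnk0 : (n : ℝ) - ((n / r : ℕ) : ℝ) ≠ 0 := fun h => hne (by rw [h]; ring)
      have hr2 : 2 ≤ r := by
        by_contra h
        have hr1 : r = 1 := by omega
        apply hnk0
        rw [hr1, Nat.div_one]
        ring
      have hTR : 6 * ((((SimpleGraph.turanGraph n r).cliqueFinset 3).card : ℕ) : ℝ)
          = (r : ℝ) * ((r : ℝ) - 1) * ((r : ℝ) - 2) * ((n / r : ℕ) : ℝ) ^ 3 := by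
        have h6 : ((6 * ((SimpleGraph.turanGraph n r).cliqueFinset 3).card : ℕ) : ℝ)
            = ((r * (r - 1) * (r - 2) * (n / r) ^ 3 : ℕ) : ℝ) := by exact_mod_cast hT
        push_cast [Nat.cast_sub (show 1 ≤ r by omega), Nat.cast_sub hr2] at h6
        exact h6
      have hEeq : (((SimpleGraph.turanGraph n r).edgeFinset.card : ℕ) : ℝ)
          = (r : ℝ) * ((n / r : ℕ) : ℝ) * ((r : ℝ) * ((n / r : ℕ) : ℝ) - ((n / r : ℕ) : ℝ)) / 2 := by
        have h1 : (n : ℝ) - ((n / r : ℕ) : ℝ)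
            = (r : ℝ) * ((n / r : ℕ) : ℝ) - ((n / r : ℕ) : ℝ) := by rw [hnR]
        nlinarith [hER, hnR]
      have hTeq : ((((SimpleGraph.turanGraph n r).cliqueFinset 3).card : ℕ) : ℝ)
          = (r : ℝ) * ((r : ℝ) - 1) * ((r : ℝ) - 2) * ((n / r : ℕ) : ℝ) ^ 3 / 6 := by
        linarith
      have hid : ((r : ℝ) * ((n / r : ℕ) : ℝ)) * ((r : ℝ) * ((n / r : ℕ) : ℝ) - ((n / r : ℕ) : ℝ))
          = (n : ℝ) * ((n : ℝ) - ((n / r : ℕ) : ℝ)) := by rw [← hnR]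
      have hprod : ((r : ℝ) * ((n / r : ℕ) : ℝ))
          * ((r : ℝ) * ((n / r : ℕ) : ℝ) - ((n / r : ℕ) : ℝ)) ≠ 0 := by
        rw [hid]; exact hne
      have hprod2 : ((r : ℝ) * ((n / r : ℕ) : ℝ))
          * ((r : ℝ) * ((n / r : ℕ) : ℝ) - ((n / r : ℕ) : ℝ)) / 2 ≠ 0 :=
        div_ne_zero hprod two_ne_zero
      have hdiv9 : 9 * ((r : ℝ) * ((r : ℝ) - 1) * ((r : ℝ) - 2) * ((n / r : ℕ) : ℝ) ^ 3 / 6) ^ 2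
          / ((r : ℝ) * ((n / r : ℕ) : ℝ) * ((r : ℝ) * ((n / r : ℕ) : ℝ) - ((n / r : ℕ) : ℝ)) / 2)
          = (r : ℝ) * ((r : ℝ) - 1) * ((r : ℝ) - 2) ^ 2 * ((n / r : ℕ) : ℝ) ^ 4 / 2 := by
        rw [div_eq_iff hprod2]
        ring
      rw [hEeq, hTeq, hnR, hdiv9]
      ring
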